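/- arXiv:1601.07760 — 2 statements merged into one kernel-verified Lean document; each statement's English description precedes it below -/
import Mathlib

section
/- For every quaternionic n×n matrix M, the Study determinant Sdet(M) = det(ψ(M)) is a nonnegative real number (i.e., the complex number det(ψ(M)) is real and ≥ 0). -/
open scoped Quaternion

/-- The simplex part of a quaternion `x = a + j·b`: the complex number `a = x₀ + x₁·i`. -/
noncomputable def qSimplex (x : ℍ[ℝ]) : ℂ := ⟨x.re, x.imI⟩

/-- The perplex part of a quaternion `x = a + j·b`: the complex number `b = x₂ − x₃·i`. -/
noncomputable def qPerplex (x : ℍ[ℝ]) : ℂ := ⟨x.imJ, -x.imK⟩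

/-- The simplex part of a quaternionic matrix. -/
noncomputable def matSimplex {α β : Type*} (M : Matrix α β ℍ[ℝ]) : Matrix α β ℂ :=
  Matrix.of fun r s => qSimplex (M r s)

/-- The perplex part of a quaternionic matrix. -/
noncomputable def matPerplex {α β : Type*} (M : Matrix α β ℍ[ℝ]) : Matrix α β ℂ :=
  Matrix.of fun r s => qPerplex (M r s)

/-- The complex-block representation `ψ(M) = [[Mˢ, −conj(Mᵖ)], [Mᵖ, conj(Mˢ)]]`
of a quaternionic matrix `M = Mˢ + j·Mᵖ`. -/
noncomputable def psi {α β : Type*} (M : Matrix α β ℍ[ℝ]) : Matrix (α ⊕ α) (β ⊕ β) ℂ :=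
  Matrix.fromBlocks (matSimplex M) (-(matPerplex M).map (starRingEnd ℂ))
    (matPerplex M) ((matSimplex M).map (starRingEnd ℂ))

/-- The Study determinant of a square quaternionic matrix: `Sdet(M) = det(ψ(M))`. -/
noncomputable def Sdet {α : Type*} [Fintype α] [DecidableEq α] (M : Matrix α α ℍ[ℝ]) : ℂ :=
  (psi M).det

section Aux

open Matrix

@[simp] lemma qSimplex_zero : qSimplex 0 = 0 := by
  simp [qSimplex, Complex.ext_iff]

@[simp] lemma qPerplex_zero : qPerplex 0 = 0 := by
  simp [qPerplex, Complex.ext_iff]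

@[simp] lemma qSimplex_one : qSimplex 1 = 1 := by
  simp [qSimplex, Complex.ext_iff]

@[simp] lemma qPerplex_one : qPerplex 1 = 0 := by
  simp [qPerplex, Complex.ext_iff]

lemma qSimplex_add (x y : ℍ[ℝ]) : qSimplex (x + y) = qSimplex x + qSimplex y := by
  simp [qSimplex, Complex.ext_iff]

lemma qPerplex_add (x y : ℍ[ℝ]) : qPerplex (x + y) = qPerplex x + qPerplex y := by
  simp [qPerplex, Complex.ext_iff]
  ring

noncomputable def qSimplexHom : ℍ[ℝ] →+ ℂ := AddMonoidHom.mk' qSimplex qSimplex_add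

noncomputable def qPerplexHom : ℍ[ℝ] →+ ℂ := AddMonoidHom.mk' qPerplex qPerplex_add

lemma qSimplex_mul (x y : ℍ[ℝ]) :
    qSimplex (x * y) = qSimplex x * qSimplex y - (starRingEnd ℂ) (qPerplex x) * qPerplex y := by
  apply Complex.ext <;>
    simp [qSimplex, qPerplex, Complex.mul_re, Complex.mul_im, Quaternion.re_mul,
      Quaternion.imI_mul] <;> ring

lemma qPerplex_mul (x y : ℍ[ℝ]) :
    qPerplex (x * y) = (starRingEnd ℂ) (qSimplex x) * qPerplex y + qPerplex x * qSimplex y := by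
  apply Complex.ext <;>
    simp [qSimplex, qPerplex, Complex.mul_re, Complex.mul_im, Quaternion.imJ_mul,
      Quaternion.imK_mul] <;> ring

lemma matSimplex_mul {l m p : Type*} [Fintype m] (M : Matrix l m ℍ[ℝ]) (N : Matrix m p ℍ[ℝ]) :
    matSimplex (M * N)
      = matSimplex M * matSimplex N - (matPerplex M).map (starRingEnd ℂ) * matPerplex N := by
  ext i j
  have h : matSimplex (M * N) i j = ∑ k, qSimplex (M i k * N k j) := by
    simp only [matSimplex, Matrix.of_apply, Matrix.mul_apply]
    exact map_sum qSimplexHom _ _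
  rw [h]
  simp_rw [qSimplex_mul]
  rw [Finset.sum_sub_distrib]
  simp [matSimplex, matPerplex, Matrix.mul_apply]

lemma matPerplex_mul {l m p : Type*} [Fintype m] (M : Matrix l m ℍ[ℝ]) (N : Matrix m p ℍ[ℝ]) :
    matPerplex (M * N)
      = (matSimplex M).map (starRingEnd ℂ) * matPerplex N + matPerplex M * matSimplex N := by
  ext i j
  have h : matPerplex (M * N) i j = ∑ k, qPerplex (M i k * N k j) := by
    simp only [matPerplex, Matrix.of_apply, Matrix.mul_apply]
    exact map_sum qPerplexHom _ _
  rw [h]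
  simp_rw [qPerplex_mul]
  rw [Finset.sum_add_distrib]
  simp [matSimplex, matPerplex, Matrix.mul_apply]

lemma psi_mul {m : Type*} [Fintype m] (M N : Matrix m m ℍ[ℝ]) :
    psi (M * N) = psi M * psi N := by
  rw [psi, psi, psi, Matrix.fromBlocks_multiply, matSimplex_mul, matPerplex_mul]
  have h11 : matSimplex M * matSimplex N - (matPerplex M).map (starRingEnd ℂ) * matPerplex N
      = matSimplex M * matSimplex N + -(matPerplex M).map (starRingEnd ℂ) * matPerplex N := by
    rw [neg_mul, sub_eq_add_neg]
  have h12 : -(((matSimplex M).map (starRingEnd ℂ) * matPerplex N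
          + matPerplex M * matSimplex N)).map (starRingEnd ℂ)
      = matSimplex M * -(matPerplex N).map (starRingEnd ℂ)
        + -(matPerplex M).map (starRingEnd ℂ) * (matSimplex N).map (starRingEnd ℂ) := by
    ext i j
    simp [Matrix.map_apply, Matrix.mul_apply, map_sum, mul_neg, neg_mul,
      Finset.sum_add_distrib]
    ring
  have h21 : (matSimplex M).map (starRingEnd ℂ) * matPerplex N + matPerplex M * matSimplex N
      = matPerplex M * matSimplex N + (matSimplex M).map (starRingEnd ℂ) * matPerplex N :=
    add_comm _ _
  have h22 : ((matSimplex M * matSimplex N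
          - (matPerplex M).map (starRingEnd ℂ) * matPerplex N)).map (starRingEnd ℂ)
      = matPerplex M * -(matPerplex N).map (starRingEnd ℂ)
        + (matSimplex M).map (starRingEnd ℂ) * (matSimplex N).map (starRingEnd ℂ) := by
    ext i j
    simp [Matrix.map_apply, Matrix.mul_apply, map_sum, mul_neg, neg_mul,
      Finset.sum_add_distrib, Finset.sum_sub_distrib]
    ring
  rw [h22, h12, h11, h21]

lemma Sdet_mul {m : Type*} [Fintype m] [DecidableEq m] (M N : Matrix m m ℍ[ℝ]) :
    Sdet (M * N) = Sdet M * Sdet N := by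
  rw [Sdet, Sdet, Sdet, psi_mul, Matrix.det_mul]

end Aux
section Aux2

open Matrix

lemma Sdet_submatrix {α β : Type*} [Fintype α] [DecidableEq α] [Fintype β] [DecidableEq β]
    (e : α ≃ β) (M : Matrix β β ℍ[ℝ]) : Sdet (M.submatrix e e) = Sdet M := by
  have h : psi (M.submatrix e e)
      = (psi M).submatrix (⇑(e.sumCongr e)) (⇑(e.sumCongr e)) := by
    ext (i | i) (j | j) <;> rfl
  rw [Sdet, h, Matrix.det_submatrix_equiv_self, Sdet]

lemma Sdet_permute {α : Type*} [Fintype α] [DecidableEq α] (σ : Equiv.Perm α)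
    (M : Matrix α α ℍ[ℝ]) : Sdet (M.submatrix σ id) = Sdet M := by
  have h : psi (M.submatrix σ id)
      = (psi M).submatrix (⇑(σ.sumCongr σ)) id := by
    ext (i | i) (j | j) <;> rfl
  rw [Sdet, h, Matrix.det_permute, Sdet]
  simp [Equiv.Perm.sign_sumCongr, Int.units_mul_self]

lemma Sdet_fromBlocks {k m : Type*} [Fintype k] [DecidableEq k] [Fintype m] [DecidableEq m]
    (A : Matrix k k ℍ[ℝ]) (D : Matrix m m ℍ[ℝ]) :
    Sdet (Matrix.fromBlocks A 0 0 D) = Sdet A * Sdet D := by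
  have h : psi (Matrix.fromBlocks A 0 0 D)
      = (Matrix.fromBlocks (psi A) 0 0 (psi D)).submatrix
          (⇑(Equiv.sumSumSumComm k m k m)) (⇑(Equiv.sumSumSumComm k m k m)) := by
    ext (i | i) (j | j) <;> rcases i with i | i <;> rcases j with j | j <;>
      simp [psi, matSimplex, matPerplex]
  rw [Sdet, h, Matrix.det_submatrix_equiv_self, Matrix.det_fromBlocks_zero₂₁, Sdet, Sdet]

end Aux2
section Aux3

open Matrix

lemma fin2_cases (r : Fin 2) : r = 0 ∨ r = 1 := by omega

/-- The interleaving equivalence between `Lex (Fin n × Fin 2)` and `Fin n ⊕ Fin n`. -/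
def lexEquiv (n : ℕ) : Lex (Fin n × Fin 2) ≃ (Fin n ⊕ Fin n) where
  toFun p := if (ofLex p).2 = 0 then Sum.inl (ofLex p).1 else Sum.inr (ofLex p).1
  invFun x := Sum.elim (fun i => toLex (i, 0)) (fun i => toLex (i, 1)) x
  left_inv p := by
    rcases h : ofLex p with ⟨i, r⟩
    have hp : p = toLex (i, r) := by rw [← h]; rfl
    rw [hp]
    rcases fin2_cases r with rfl | rfl <;> simp
  right_inv x := by rcases x with i | i <;> simp

lemma lexEquiv_apply_zero {n : ℕ} (i : Fin n) : lexEquiv n (toLex (i, 0)) = Sum.inl i := rfl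

lemma lexEquiv_apply_one {n : ℕ} (i : Fin n) : lexEquiv n (toLex (i, 1)) = Sum.inr i := rfl

lemma Sdet_lowerTriangular {n : ℕ} (E : Matrix (Fin n) (Fin n) ℍ[ℝ])
    (h0 : ∀ i j : Fin n, i < j → E i j = 0) (h1 : ∀ i, E i i = 1) : Sdet E = 1 := by
  rw [Sdet, ← Matrix.det_submatrix_equiv_self (lexEquiv n) (psi E)]
  set S := (psi E).submatrix (lexEquiv n) (lexEquiv n) with hS
  have htri : S.BlockTriangular OrderDual.toDual := by
    intro p p' hlt
    have hlt' : p < p' := hlt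
    rcases hp : ofLex p with ⟨a, r⟩
    rcases hp' : ofLex p' with ⟨b, s⟩
    have e1 : p = toLex (a, r) := by rw [← hp]; rfl
    have e2 : p' = toLex (b, s) := by rw [← hp']; rfl
    rw [e1, e2] at hlt' ⊢
    rw [Prod.Lex.lt_iff] at hlt'
    simp only [ofLex_toLex] at hlt'
    rcases fin2_cases r with rfl | rfl <;> rcases fin2_cases s with rfl | rfl <;>
      simp only [hS, Matrix.submatrix_apply, lexEquiv_apply_zero, lexEquiv_apply_one] <;>
      simp only [psi, Matrix.fromBlocks_apply₁₁, Matrix.fromBlocks_apply₁₂,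
        Matrix.fromBlocks_apply₂₁, Matrix.fromBlocks_apply₂₂, Matrix.neg_apply,
        Matrix.map_apply, matSimplex, matPerplex, Matrix.of_apply]
    · -- r = 0, s = 0 : qSimplex (E a b), a < b
      rcases hlt' with h | ⟨h, h2⟩
      · rw [h0 a b h, qSimplex_zero]
      · exact absurd h2 (lt_irrefl _)
    · -- r = 0, s = 1 : -conj (qPerplex (E a b)), a < b or a = b
      rcases hlt' with h | ⟨h, _⟩
      · rw [h0 a b h, qPerplex_zero]; simp
      · rw [h, h1 b, qPerplex_one]; simp
    · -- r = 1, s = 0 : qPerplex (E a b), a < b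
      rcases hlt' with h | ⟨h, h2⟩
      · rw [h0 a b h, qPerplex_zero]
      · exact absurd h2 (by decide)
    · -- r = 1, s = 1 : conj (qSimplex (E a b)), a < b
      rcases hlt' with h | ⟨h, h2⟩
      · rw [h0 a b h, qSimplex_zero]; simp
      · exact absurd h2 (lt_irrefl _)
  rw [Matrix.det_of_lowerTriangular S htri]
  apply Finset.prod_eq_one
  intro p _
  rcases hp : ofLex p with ⟨a, r⟩
  have e1 : p = toLex (a, r) := by rw [← hp]; rfl
  rw [e1]
  rcases fin2_cases r with rfl | rfl <;>
    simp [hS, lexEquiv_apply_zero, lexEquiv_apply_one, psi, matSimplex, matPerplex, h1]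

lemma Sdet_upperTriangular {n : ℕ} (E : Matrix (Fin n) (Fin n) ℍ[ℝ])
    (h0 : ∀ i j : Fin n, j < i → E i j = 0) (h1 : ∀ i, E i i = 1) : Sdet E = 1 := by
  rw [Sdet, ← Matrix.det_submatrix_equiv_self (lexEquiv n) (psi E)]
  set S := (psi E).submatrix (lexEquiv n) (lexEquiv n) with hS
  have htri : S.BlockTriangular id := by
    intro p p' hlt
    have hlt' : p' < p := hlt
    rcases hp : ofLex p with ⟨a, r⟩
    rcases hp' : ofLex p' with ⟨b, s⟩
    have e1 : p = toLex (a, r) := by rw [← hp]; rfl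
    have e2 : p' = toLex (b, s) := by rw [← hp']; rfl
    rw [e1, e2] at hlt' ⊢
    rw [Prod.Lex.lt_iff] at hlt'
    simp only [ofLex_toLex] at hlt'
    rcases fin2_cases r with rfl | rfl <;> rcases fin2_cases s with rfl | rfl <;>
      simp only [hS, Matrix.submatrix_apply, lexEquiv_apply_zero, lexEquiv_apply_one] <;>
      simp only [psi, Matrix.fromBlocks_apply₁₁, Matrix.fromBlocks_apply₁₂,
        Matrix.fromBlocks_apply₂₁, Matrix.fromBlocks_apply₂₂, Matrix.neg_apply,
        Matrix.map_apply, matSimplex, matPerplex, Matrix.of_apply]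
    · rcases hlt' with h | ⟨h, h2⟩
      · rw [h0 a b h, qSimplex_zero]
      · exact absurd h2 (lt_irrefl _)
    · rcases hlt' with h | ⟨h, h2⟩
      · rw [h0 a b h, qPerplex_zero]; simp
      · exact absurd h2 (by decide)
    · rcases hlt' with h | ⟨h, _⟩
      · rw [h0 a b h, qPerplex_zero]
      · rw [← h, h1 b, qPerplex_one]
    · rcases hlt' with h | ⟨h, h2⟩
      · rw [h0 a b h, qSimplex_zero]; simp
      · exact absurd h2 (lt_irrefl _)
  rw [Matrix.det_of_upperTriangular htri]
  apply Finset.prod_eq_one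
  intro p _
  rcases hp : ofLex p with ⟨a, r⟩
  have e1 : p = toLex (a, r) := by rw [← hp]; rfl
  rw [e1]
  rcases fin2_cases r with rfl | rfl <;>
    simp [hS, lexEquiv_apply_zero, lexEquiv_apply_one, psi, matSimplex, matPerplex, h1]

lemma Sdet_fin_one (A : Matrix (Fin 1) (Fin 1) ℍ[ℝ]) :
    Sdet A = ((Complex.normSq (qSimplex (A 0 0)) + Complex.normSq (qPerplex (A 0 0)) : ℝ) : ℂ) := by
  let e : Fin 2 ≃ (Fin 1 ⊕ Fin 1) :=
    ⟨![Sum.inl 0, Sum.inr 0], Sum.elim (fun _ => 0) (fun _ => 1),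
      by intro x; fin_cases x <;> rfl, by rintro (x | x) <;> fin_cases x <;> rfl⟩
  rw [Sdet, ← Matrix.det_submatrix_equiv_self e (psi A), Matrix.det_fin_two]
  have h0 : e 0 = Sum.inl 0 := rfl
  have h1 : e 1 = Sum.inr 0 := rfl
  simp only [Matrix.submatrix_apply, h0, h1, psi, Matrix.fromBlocks_apply₁₁,
    Matrix.fromBlocks_apply₁₂, Matrix.fromBlocks_apply₂₁, Matrix.fromBlocks_apply₂₂,
    Matrix.neg_apply, Matrix.map_apply, matSimplex, matPerplex, Matrix.of_apply]
  rw [Complex.mul_conj, neg_mul, sub_neg_eq_add, mul_comm ((starRingEnd ℂ) _),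
    Complex.mul_conj]
  push_cast
  ring

end Aux3
theorem sdet_nonneg_real {n : ℕ} (M : Matrix (Fin n) (Fin n) ℍ[ℝ]) :
    ∃ r : ℝ, 0 ≤ r ∧ Sdet M = (r : ℂ) := by
  induction n with
  | zero =>
    exact ⟨1, zero_le_one, by rw [Sdet, Matrix.det_isEmpty]; norm_num⟩
  | succ n ih =>
    by_cases hc : ∀ i, M i 0 = 0
    · refine ⟨0, le_refl _, ?_⟩
      rw [Sdet, Matrix.det_eq_zero_of_column_eq_zero (Sum.inl 0)]
      · norm_num
      · rintro (i | i) <;> simp [psi, matSimplex, matPerplex, hc]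
    · push_neg at hc
      obtain ⟨i₀, hi₀⟩ := hc
      set σ := Equiv.swap (0 : Fin (n + 1)) i₀ with hσ
      set M₁ := M.submatrix σ id with hM₁
      set q := M₁ 0 0 with hq
      have hq0 : q ≠ 0 := by
        rw [hq, hM₁]
        simpa [σ, Equiv.swap_apply_left] using hi₀
      set E : Matrix (Fin (n + 1)) (Fin (n + 1)) ℍ[ℝ] :=
        Matrix.of (fun i j => if i = j then 1 else if j = 0 then -(M₁ i 0) * q⁻¹ else 0) with hE
      set F : Matrix (Fin (n + 1)) (Fin (n + 1)) ℍ[ℝ] :=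
        Matrix.of (fun i j => if i = j then 1 else if i = 0 then -(q⁻¹ * M₁ 0 j) else 0) with hF
      set M₂ := E * M₁ with hM₂
      set M₃ := M₂ * F with hM₃
      have hrow2 : ∀ j, M₂ 0 j = M₁ 0 j := by
        intro j
        rw [hM₂, Matrix.mul_apply]
        rw [Finset.sum_eq_single 0]
        · simp [hE]
        · intro k _ hk
          have : E 0 k = 0 := by simp [hE, Ne.symm hk, hk]
          rw [this, zero_mul]
        · simp
      have hcol2 : ∀ i, i ≠ 0 → M₂ i 0 = 0 := by
        intro i hi
        rw [hM₂, Matrix.mul_apply]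
        rw [Finset.sum_eq_add_of_mem i 0 (Finset.mem_univ i) (Finset.mem_univ 0) hi]
        · have h1 : E i i = 1 := by simp [hE]
          have h2 : E i 0 = -(M₁ i 0) * q⁻¹ := by simp [hE, hi]
          have h3 : M₁ i 0 * q⁻¹ * q = M₁ i 0 := by
            rw [mul_assoc, inv_mul_cancel₀ hq0, mul_one]
          rw [h1, h2, one_mul, neg_mul, neg_mul, h3, add_neg_cancel]
        · intro k _ hk
          have : E i k = 0 := by simp [hE, Ne.symm hk.1, hk.2]
          rw [this, zero_mul]
      have hcol3 : ∀ i, M₃ i 0 = M₂ i 0 := by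
        intro i
        rw [hM₃, Matrix.mul_apply]
        rw [Finset.sum_eq_single 0]
        · simp [hF]
        · intro k _ hk
          have : F k 0 = 0 := by simp [hF, hk]
          rw [this, mul_zero]
        · simp
      have hrow3 : ∀ j, j ≠ 0 → M₃ 0 j = 0 := by
        intro j hj
        rw [hM₃, Matrix.mul_apply]
        rw [Finset.sum_eq_add_of_mem j 0 (Finset.mem_univ j) (Finset.mem_univ 0) hj]
        · have h1 : F j j = 1 := by simp [hF]
          have h2 : F 0 j = -(q⁻¹ * M₁ 0 j) := by simp [hF, Ne.symm hj]
          have h3 : M₁ 0 0 * -(q⁻¹ * M₁ 0 j) = -(M₁ 0 j) := by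
            rw [← hq, mul_neg, ← mul_assoc, mul_inv_cancel₀ hq0, one_mul]
          rw [h1, h2, mul_one, hrow2, hrow2, h3, add_neg_cancel]
        · intro k _ hk
          have : F k j = 0 := by simp [hF, hk.1, hk.2]
          rw [this, mul_zero]
      -- Sdet computations
      have hSE : Sdet E = 1 := by
        apply Sdet_lowerTriangular
        · intro i j hij
          have h1 : i ≠ j := ne_of_lt hij
          have h2 : j ≠ 0 := by
            intro h
            rw [h] at hij
            exact absurd hij (Fin.not_lt_zero i)
          simp [hE, h1, h2]
        · intro i; simp [hE]
      have hSF : Sdet F = 1 := by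
        apply Sdet_upperTriangular
        · intro i j hij
          have h1 : i ≠ j := (ne_of_lt hij).symm
          have h2 : i ≠ 0 := by
            intro h
            rw [h] at hij
            exact absurd hij (Fin.not_lt_zero j)
          simp [hF, h1, h2]
        · intro i; simp [hF]
      have hSM : Sdet M₃ = Sdet M := by
        rw [hM₃, Sdet_mul, hSF, mul_one, hM₂, Sdet_mul, hSE, one_mul, hM₁]
        exact Sdet_permute σ M
      -- block structure of M₃
      let e : (Fin 1 ⊕ Fin n) ≃ Fin (n + 1) :=
        ⟨Sum.elim (fun _ => 0) Fin.succ,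
         fun i => Fin.cases (Sum.inl 0) Sum.inr i,
         by rintro (x | x)
            · fin_cases x; rfl
            · simp,
         by intro i
            cases i using Fin.cases <;> simp⟩
      have he0 : e (Sum.inl 0) = 0 := rfl
      have heS : ∀ i : Fin n, e (Sum.inr i) = i.succ := fun _ => rfl
      set D1 : Matrix (Fin n) (Fin n) ℍ[ℝ] := Matrix.of fun i j => M₃ i.succ j.succ with hD1
      have hsub : M₃.submatrix e e
          = Matrix.fromBlocks (Matrix.of fun (_ _ : Fin 1) => q) 0 0 D1 := by
        refine Matrix.ext ?_
        rintro (i | i) (j | j)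
        · have h1 : e (Sum.inl i) = 0 := rfl
          have h2 : e (Sum.inl j) = 0 := rfl
          simp only [Matrix.submatrix_apply, h1, h2, Matrix.fromBlocks_apply₁₁, Matrix.of_apply]
          rw [hcol3, hrow2, ← hq]
        · have h1 : e (Sum.inl i) = 0 := rfl
          simp only [Matrix.submatrix_apply, h1, heS, Matrix.fromBlocks_apply₁₂,
            Matrix.zero_apply]
          exact hrow3 _ (Fin.succ_ne_zero j)
        · have h2 : e (Sum.inl j) = 0 := rfl
          simp only [Matrix.submatrix_apply, h2, heS, Matrix.fromBlocks_apply₂₁,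
            Matrix.zero_apply]
          rw [hcol3]
          exact hcol2 _ (Fin.succ_ne_zero i)
        · rfl
      obtain ⟨r, hr0, hr⟩ := ih D1
      refine ⟨(Complex.normSq (qSimplex q) + Complex.normSq (qPerplex q)) * r, ?_, ?_⟩
      · have := Complex.normSq_nonneg (qSimplex q)
        have := Complex.normSq_nonneg (qPerplex q)
        positivity
      · rw [← hSM, ← Sdet_submatrix e M₃, hsub, Sdet_fromBlocks, Sdet_fin_one, hr]
        have hAq : (Matrix.of (fun (_ _ : Fin 1) => q) : Matrix (Fin 1) (Fin 1) ℍ[ℝ]) 0 0 = q :=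
          rfl
        rw [hAq]
        push_cast
        ring
end

section
/- (Chen–Fox–Lyndon factorization) Let X be a finite nonempty totally ordered alphabet and order the words in X* lexicographically. Every nonempty word w ∈ X* admits a unique factorization w = l_1 l_2 ⋯ l_d where l_1, l_2, …, l_d are Lyndon words and l_1 ≥ l_2 ≥ ⋯ ≥ l_d. -/
/-- A nonempty word is a *Lyndon word* if it is prime (not a power `v^r` with `r ≥ 2`)
and lexicographically minimal among all of its cyclic rotations. -/
def IsLyndon {X : Type*} [LinearOrder X] (w : List X) : Prop :=
  w ≠ [] ∧ (∀ (v : List X) (r : ℕ), 2 ≤ r → w ≠ (List.replicate r v).flatten) ∧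
    ∀ i : ℕ, w ≤ w.rotate i

namespace CFL

variable {X : Type*} [LinearOrder X]

/-- A word is `Lyndon'` if it is nonempty and lexicographically (non-strictly would be
automatic; here strictly) smaller than each of its proper nonempty suffixes. -/
def Lyndon' (w : List X) : Prop :=
  w ≠ [] ∧ ∀ s : List X, s ≠ [] → s.length < w.length → s <:+ w → w < s

theorem prefix_le {u v : List X} (h : u <+: v) : u ≤ v := by
  induction u generalizing v with
  | nil => rcases v with _ | ⟨b, v⟩ <;> [exact le_rfl; exact le_of_lt List.Lex.nil]
  | cons a u ih =>
    obtain ⟨t, rfl⟩ := h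
    exact List.cons_le_cons a (ih (u.prefix_append t))

theorem lt_append_of_lt_of_not_prefix :
    ∀ (u v : List X), u < v → ¬u <+: v → ∀ (a b : List X), u ++ a < v ++ b
  | [], _, _, hp, _, _ => absurd List.nil_prefix hp
  | _ :: _, [], h, _, _, _ => absurd h (List.not_lex_nil)
  | c :: u, d :: v, h, hp, a, b => by
    have h' : List.Lex (· < ·) (c :: u) (d :: v) := h
    cases h' with
    | cons h'' =>
      rw [List.cons_prefix_cons, not_and] at hp
      exact List.Lex.cons (lt_append_of_lt_of_not_prefix u v h'' (hp rfl) a b)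
    | rel h'' => exact List.Lex.rel h''

theorem append_lt_append_left {u a b : List X} : u ++ a < u ++ b ↔ a < b := by
  constructor
  · intro h
    induction u with
    | nil => exact h
    | cons c u ih =>
      have h' : List.Lex (· < ·) (c :: (u ++ a)) (c :: (u ++ b)) := h
      rw [List.lex_cons_iff] at h'
      exact ih h'
  · intro h
    exact List.Lex.append_left _ h u

theorem append_le_append_left {u a b : List X} : u ++ a ≤ u ++ b ↔ a ≤ b := by
  rw [← not_lt, ← not_lt, append_lt_append_left]

/-- Two commuting words are powers of a common word. -/
theorem comm_pow : ∀ (n : ℕ) (p s : List X), p.length + s.length ≤ n → p ++ s = s ++ p →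
    ∃ (z : List X) (k m : ℕ),
      p = (List.replicate k z).flatten ∧ s = (List.replicate m z).flatten := by
  intro n
  induction n with
  | zero =>
    intro p s hn _
    have hp : p = [] := List.length_eq_zero_iff.mp (by omega)
    have hs : s = [] := List.length_eq_zero_iff.mp (by omega)
    exact ⟨[], 0, 0, by simp [hp], by simp [hs]⟩
  | succ n ih =>
    intro p s hn h
    rcases eq_or_ne p [] with rfl | hp
    · exact ⟨s, 0, 1, by simp, by simp⟩
    rcases eq_or_ne s [] with rfl | hs
    · exact ⟨p, 1, 0, by simp, by simp⟩
    have hp1 : 1 ≤ p.length := List.length_pos_iff.mpr hp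
    have hs1 : 1 ≤ s.length := List.length_pos_iff.mpr hs
    rcases le_total p.length s.length with hle | hle
    · have hpre : p <+: s := by
        have h1 := congrArg (List.take p.length) h
        rw [List.take_left, List.take_append_of_le_length hle] at h1
        rw [h1]
        exact List.take_prefix _ _
      obtain ⟨s', rfl⟩ := hpre
      have h2 : p ++ s' = s' ++ p := by
        apply List.append_cancel_left (as := p)
        rw [h, List.append_assoc]
      obtain ⟨z, k, m, hpz, hsz⟩ := ih p s' (by simp at hn ⊢; omega) h2
      exact ⟨z, k, k + m, hpz, by
        rw [List.replicate_add, List.flatten_append, ← hpz, ← hsz]⟩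
    · have hpre : s <+: p := by
        have h1 := congrArg (List.take s.length) h.symm
        rw [List.take_left, List.take_append_of_le_length hle] at h1
        rw [h1]
        exact List.take_prefix _ _
      obtain ⟨p', rfl⟩ := hpre
      have h2 : s ++ p' = p' ++ s := by
        apply List.append_cancel_left (as := s)
        conv_rhs => rw [← List.append_assoc, h]
      obtain ⟨z, k, m, hsz, hpz⟩ := ih s p' (by simp at hn ⊢; omega) h2
      exact ⟨z, k + m, k, by
        rw [List.replicate_add, List.flatten_append, ← hpz, ← hsz], hsz⟩

theorem lyndon'_singleton (a : X) : Lyndon' [a] := by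
  refine ⟨by simp, fun s hs hlen _ => ?_⟩
  simp only [List.length_singleton, Nat.lt_one_iff] at hlen
  exact absurd (List.length_eq_zero_iff.mp hlen) hs

theorem Lyndon'.isLyndon {w : List X} (h : Lyndon' w) : IsLyndon w := by
  obtain ⟨hne, hsuf⟩ := h
  refine ⟨hne, ?_, ?_⟩
  · rintro v r hr rfl
    have hv : v ≠ [] := by
      rintro rfl
      simp at hne
    have hv1 : 1 ≤ v.length := List.length_pos_iff.mpr hv
    have hlen : (List.replicate r v).flatten.length = r * v.length := by
      simp [List.length_flatten, List.map_replicate, List.sum_replicate, smul_eq_mul]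
    set s := (List.replicate (r - 1) v).flatten with hsdef
    have hslen : s.length = (r - 1) * v.length := by
      simp [hsdef, List.length_flatten, List.map_replicate, List.sum_replicate, smul_eq_mul]
    have h1 : (List.replicate r v).flatten = v ++ s := by
      rw [hsdef]
      conv_lhs => rw [show r = (r - 1) + 1 by omega]
      rw [List.replicate_succ, List.flatten_cons]
    have h2 : (List.replicate r v).flatten = s ++ v := by
      rw [hsdef]
      conv_lhs => rw [show r = (r - 1) + 1 by omega]
      rw [List.replicate_add, List.flatten_append]
      simp
    have hs1 : 1 ≤ s.length := by
      rw [hslen]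
      exact Nat.one_le_iff_ne_zero.mpr (Nat.mul_ne_zero (by omega) (by omega))
    have hsne : s ≠ [] := by
      intro hcon
      rw [hcon] at hs1
      simp at hs1
    have hslt : s.length < (List.replicate r v).flatten.length := by
      rw [hslen, hlen]
      exact Nat.mul_lt_mul_of_lt_of_le (by omega) le_rfl (by omega)
    have hlt := hsuf s hsne hslt ⟨v, h1.symm⟩
    exact absurd (prefix_le ⟨v, h2.symm⟩) (not_le.mpr hlt)
  · intro i
    have hn : 0 < w.length := List.length_pos_iff.mpr hne
    rw [← List.rotate_mod]
    set j := i % w.length with hj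
    have hjn : j < w.length := Nat.mod_lt _ hn
    rcases Nat.eq_zero_or_pos j with h0 | h0
    · rw [h0, List.rotate_zero]
    · have hrot : w.rotate j = w.drop j ++ w.take j :=
        List.rotate_eq_drop_append_take hjn.le
      have hsne : w.drop j ≠ [] := by
        intro hcon
        have := congrArg List.length hcon
        simp at this
        omega
      have hlt : w < w.drop j := hsuf _ hsne (by simp; omega) (List.drop_suffix j w)
      have hnp : ¬w <+: w.drop j := by
        intro hp
        have := hp.length_le
        simp at this
        omega
      have := lt_append_of_lt_of_not_prefix w (w.drop j) hlt hnp [] (w.take j)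
      rw [List.append_nil] at this
      rw [hrot]
      exact this.le

theorem IsLyndon.le_suffix {w s : List X} (h : IsLyndon w) (hs : s <:+ w) (hne : s ≠ []) :
    w ≤ s := by
  obtain ⟨hwne, hprime, hrot⟩ := h
  by_contra hcon
  push_neg at hcon
  obtain ⟨p, rfl⟩ := hs
  have hp : p ≠ [] := by
    rintro rfl
    rw [List.nil_append] at hcon
    exact lt_irrefl _ hcon
  have hws : p ++ s ≤ s ++ p := by
    have h5 := hrot p.length
    rwa [List.rotate_eq_drop_append_take (by simp), List.drop_left, List.take_left] at h5
  by_cases hpre : s <+: p ++ s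
  · -- bordered case
    set t := (p ++ s).drop s.length with htdef
    have hw2 : p ++ s = s ++ t := by
      conv_lhs => rw [← List.take_append_drop s.length (p ++ s)]
      rw [← List.prefix_iff_eq_take.mp hpre]
    have hlent : t.length = p.length := by
      have := congrArg List.length hw2
      simp at this
      omega
    have h1 : t ≤ p := by
      rw [hw2] at hws
      exact append_le_append_left.mp hws
    have hws2 : s ++ t ≤ t ++ s := by
      have h5 := hrot s.length
      rw [hw2] at h5
      rwa [List.rotate_eq_drop_append_take (by simp), List.drop_left, List.take_left] at h5
    have h2 : p ≤ t := by
      by_contra hc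
      push_neg at hc
      have hnp : ¬t <+: p := by
        intro hp2
        rw [hp2.eq_of_length hlent] at hc
        exact lt_irrefl _ hc
      have h6 := lt_append_of_lt_of_not_prefix t p hc hnp s s
      have h7 : s ++ t < p ++ s := lt_of_le_of_lt hws2 h6
      rw [hw2] at h7
      exact lt_irrefl _ h7
    have hpt : t = p := le_antisymm h1 h2
    have hcomm : p ++ s = s ++ p := by rw [hw2, hpt]
    obtain ⟨z, k, m, hpz, hsz⟩ := comm_pow (p.length + s.length) p s le_rfl hcomm
    have hk : k ≠ 0 := by
      rintro rfl
      simp at hpz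
      exact hp hpz
    have hm : m ≠ 0 := by
      rintro rfl
      simp at hsz
      exact hne hsz
    exact hprime z (k + m) (by omega)
      (by rw [List.replicate_add, List.flatten_append, ← hpz, ← hsz])
  · have := lt_append_of_lt_of_not_prefix s (p ++ s) hcon hpre p []
    rw [List.append_nil] at this
    exact absurd hws (not_le.mpr this)

theorem Lyndon'.append {l m : List X} (hl : Lyndon' l) (hm : Lyndon' m) (hlm : l < m) :
    Lyndon' (l ++ m) := by
  obtain ⟨hlne, hlsuf⟩ := hl
  obtain ⟨hmne, hmsuf⟩ := hm
  have hl1 : 1 ≤ l.length := List.length_pos_iff.mpr hlne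
  have hm1 : 1 ≤ m.length := List.length_pos_iff.mpr hmne
  have key : l ++ m < m := by
    by_cases hpre : l <+: m
    · obtain ⟨m', rfl⟩ := hpre
      have hm' : m' ≠ [] := by
        rintro rfl
        rw [List.append_nil] at hlm
        exact lt_irrefl _ hlm
      have hlt : l ++ m' < m' :=
        hmsuf m' hm' (by simp [List.length_pos_iff.mpr hlne]) (List.suffix_append l m')
      exact append_lt_append_left.mpr hlt
    · have := lt_append_of_lt_of_not_prefix l m hlm hpre m []
      rwa [List.append_nil] at this
  refine ⟨by simp [hlne], fun s hs hslen hssuf => ?_⟩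
  rcases le_or_gt s.length m.length with hle | hgt
  · have hsm : s <:+ m := List.suffix_of_suffix_length_le hssuf (List.suffix_append l m) hle
    rcases eq_or_ne s m with rfl | hne
    · exact key
    · exact key.trans
        (hmsuf s hs (Nat.lt_of_le_of_ne hle fun he => hne (hsm.eq_of_length he)) hsm)
  · -- s = s' ++ m with s' a proper nonempty suffix of l
    have hslen' : s.length < l.length + m.length := by simpa using hslen
    set k := l.length + m.length - s.length with hkdef
    have hk : k < l.length := by omega
    have hk0 : 0 < k := by omega
    have hseq : s = l.drop k ++ m := by
      have h9 := List.suffix_iff_eq_drop.mp hssuf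
      rw [List.length_append, ← hkdef, List.drop_append_of_le_length hk.le] at h9
      exact h9
    set s' := l.drop k with hs'def
    have hs'ne : s' ≠ [] := by
      intro hcon
      have := congrArg List.length hcon
      simp [hs'def] at this
      omega
    have hlt : l < s' := hlsuf s' hs'ne (by simp [hs'def]; omega) (List.drop_suffix k l)
    have hnp : ¬l <+: s' := by
      intro hp
      have := hp.length_le
      simp [hs'def] at this
      omega
    rw [hseq]
    exact lt_append_of_lt_of_not_prefix l s' hlt hnp m m

theorem not_chain' {α : Type*} {R : α → α → Prop} :
    ∀ (l : List α), ¬List.Chain' R l → ∃ x a b y, l = x ++ a :: b :: y ∧ ¬R a b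
  | [], h => absurd List.isChain_nil h
  | [a], h => absurd (List.isChain_singleton a) h
  | a :: b :: t, h => by
    change ¬List.IsChain R (a :: b :: t) at h
    rw [List.isChain_cons_cons] at h
    by_cases hr : R a b
    · have hc : ¬List.Chain' R (b :: t) := fun hc => h ⟨hr, hc⟩
      obtain ⟨x, c, d, y, heq, hncd⟩ := not_chain' (b :: t) hc
      exact ⟨a :: x, c, d, y, by rw [List.cons_append, ← heq], hncd⟩
    · exact ⟨[], a, b, t, rfl, hr⟩

theorem exists_good : ∀ (n : ℕ) (ls : List (List X)), ls.length ≤ n →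
    (∀ l ∈ ls, Lyndon' l) →
    ∃ ls' : List (List X), ls'.flatten = ls.flatten ∧ (∀ l ∈ ls', Lyndon' l) ∧
      List.Chain' (fun a b => b ≤ a) ls' := by
  intro n
  induction n with
  | zero =>
    intro ls h _
    have : ls = [] := List.length_eq_zero_iff.mp (Nat.le_zero.mp h)
    exact ⟨[], by rw [this], by simp, List.isChain_nil⟩
  | succ n ih =>
    intro ls hlen hl
    by_cases hc : List.Chain' (fun a b : List X => b ≤ a) ls
    · exact ⟨ls, rfl, hl, hc⟩
    · obtain ⟨x, a, b, y, rfl, hab⟩ := not_chain' ls hc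
      push_neg at hab
      have ha : Lyndon' a := hl a (by simp)
      have hb : Lyndon' b := hl b (by simp)
      have hmerge : Lyndon' (a ++ b) := ha.append hb hab
      obtain ⟨ls', h1, h2, h3⟩ := ih (x ++ (a ++ b) :: y)
        (by simp at hlen ⊢; omega)
        (by
          intro l hml
          simp only [List.mem_append, List.mem_cons] at hml
          rcases hml with hml | hml | hml
          · exact hl l (by simp [hml])
          · rw [hml]; exact hmerge
          · exact hl l (by simp [hml]))
      refine ⟨ls', ?_, h2, h3⟩
      rw [h1]
      simp [List.flatten_append, List.append_assoc]

theorem find_suffix : ∀ (M : List (List X)) (l : List X), (∀ m ∈ M, m ≠ []) → l ≠ [] →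
    l <+: M.flatten → ∃ m ∈ M, ∃ u, u ≠ [] ∧ u <:+ l ∧ u <+: m
  | [], l, _, hl, hp => by
    simp only [List.flatten_nil, List.prefix_nil] at hp
    exact absurd hp hl
  | m :: M, l, hM, hl, hp => by
    rw [List.flatten_cons] at hp
    rcases le_or_gt l.length m.length with hle | hlt
    · have : l <+: m := List.prefix_of_prefix_length_le hp (List.prefix_append m _) hle
      exact ⟨m, by simp, l, hl, List.suffix_refl l, this⟩
    · have hm : m <+: l := by
        refine List.prefix_of_prefix_length_le (List.prefix_append m _) hp hlt.le
      obtain ⟨l', rfl⟩ := hm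
      have hl' : l' ≠ [] := by
        rintro rfl
        simp at hlt
      have hp' : l' <+: M.flatten := by
        obtain ⟨t, ht⟩ := hp
        rw [List.append_assoc] at ht
        exact ⟨t, List.append_cancel_left ht⟩
      obtain ⟨m', hm', u, hu, hus, hup⟩ :=
        find_suffix M l' (fun x hx => hM x (by simp [hx])) hl' hp'
      exact ⟨m', by simp [hm'], u, hu, hus.trans (List.suffix_append m l'), hup⟩

theorem chain_head_le {m : List X} {M : List (List X)}
    (h : List.Chain' (fun a b => b ≤ a) (m :: M)) : ∀ x ∈ m :: M, x ≤ m := by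
  intro x hx
  rcases List.mem_cons.mp hx with rfl | hx
  · exact le_rfl
  · have hpw := List.isChain_iff_pairwise.mp h
    exact (List.pairwise_cons.mp hpw).1 x hx

theorem key_contra {l m : List X} {M : List (List X)} (hlyn : IsLyndon l)
    (hall : ∀ x ∈ m :: M, IsLyndon x) (hch : List.Chain' (fun a b => b ≤ a) (m :: M))
    (hpre : l <+: (m :: M).flatten) (hlen : m.length < l.length) : False := by
  obtain ⟨m', hm', u, hu, hus, hup⟩ :=
    find_suffix (m :: M) l (fun x hx => (hall x hx).1) hlyn.1 hpre
  have h1 : l ≤ u := IsLyndon.le_suffix hlyn hus hu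
  have h2 : u ≤ m' := prefix_le hup
  have h3 : m' ≤ m := chain_head_le hch m' hm'
  have h4 : m ≤ l := prefix_le
    (List.prefix_of_prefix_length_le
      (by rw [List.flatten_cons]; exact List.prefix_append _ _) hpre hlen.le)
  have heq : l = m := le_antisymm (h1.trans (h2.trans h3)) h4
  rw [heq] at hlen
  exact lt_irrefl _ hlen

theorem eq_nil_of_flatten_nil : ∀ (ls : List (List X)), ls.flatten = [] →
    (∀ l ∈ ls, IsLyndon l) → ls = []
  | [], _, _ => rfl
  | l :: L, h, hl => by
    rw [List.flatten_cons, List.append_eq_nil_iff] at h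
    exact absurd h.1 (hl l (by simp)).1

theorem uniq : ∀ (n : ℕ) (w : List X), w.length ≤ n → ∀ ls₁ ls₂ : List (List X),
    ls₁.flatten = w → (∀ l ∈ ls₁, IsLyndon l) → List.Chain' (fun a b => b ≤ a) ls₁ →
    ls₂.flatten = w → (∀ l ∈ ls₂, IsLyndon l) → List.Chain' (fun a b => b ≤ a) ls₂ →
    ls₁ = ls₂ := by
  intro n
  induction n with
  | zero =>
    intro w hw ls₁ ls₂ h1 h2 _ h4 h5 _
    have hwnil : w = [] := List.length_eq_zero_iff.mp (Nat.le_zero.mp hw)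
    rw [eq_nil_of_flatten_nil ls₁ (by rw [h1, hwnil]) h2,
      eq_nil_of_flatten_nil ls₂ (by rw [h4, hwnil]) h5]
  | succ n ih =>
    intro w hw ls₁ ls₂ h1 h2 h3 h4 h5 h6
    rcases eq_or_ne w [] with rfl | hwne
    · rw [eq_nil_of_flatten_nil ls₁ h1 h2, eq_nil_of_flatten_nil ls₂ h4 h5]
    match ls₁, ls₂ with
    | [], _ => exact absurd h1.symm hwne
    | l :: L, [] => exact absurd h4.symm hwne
    | l :: L, m :: M =>
      have hlpre : l <+: w := by
        rw [← h1, List.flatten_cons]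
        exact List.prefix_append _ _
      have hmpre : m <+: w := by
        rw [← h4, List.flatten_cons]
        exact List.prefix_append _ _
      rcases lt_trichotomy l.length m.length with hlt | heq | hgt
      · exact absurd (key_contra (h5 m (by simp)) h2 h3 (by rw [h1]; exact hmpre) hlt)
          not_false
      · have hlm : l = m :=
          (List.prefix_of_prefix_length_le hlpre hmpre heq.le).eq_of_length heq
        subst hlm
        have hLM : L.flatten = M.flatten := by
          apply List.append_cancel_left (as := l)
          rw [← List.flatten_cons, ← List.flatten_cons, h1, h4]
        have hl1 : 1 ≤ l.length := List.length_pos_iff.mpr (h2 l (by simp)).1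
        have hwlen : w.length = l.length + L.flatten.length := by
          rw [← h1]; simp
        have := ih L.flatten (by omega) L M rfl
          (fun x hx => h2 x (by simp [hx])) h3.tail
          hLM.symm (fun x hx => h5 x (by simp [hx])) h6.tail
        rw [this]
      · exact absurd (key_contra (h2 l (by simp)) h5 h6 (by rw [h4]; exact hlpre) hgt)
          not_false

theorem flatten_map_singleton (w : List X) : (w.map fun a => [a]).flatten = w := by
  induction w with
  | nil => rfl
  | cons a w ih => simp [ih]

end CFL

/-- Chen–Fox–Lyndon: every nonempty word factorizes uniquely as a nonincreasing
product of Lyndon words. -/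
theorem lyndon_factorization {X : Type*} [Fintype X] [Nonempty X] [LinearOrder X]
    (w : List X) (hw : w ≠ []) :
    ∃! ls : List (List X),
      ls.flatten = w ∧ (∀ l ∈ ls, IsLyndon l) ∧ List.Chain' (fun a b => b ≤ a) ls := by
  obtain ⟨ls, h1, h2, h3⟩ := CFL.exists_good (w.map fun a => [a]).length
    (w.map fun a => [a]) le_rfl
    (by
      intro l hl
      simp only [List.mem_map] at hl
      obtain ⟨a, _, rfl⟩ := hl
      exact CFL.lyndon'_singleton a)
  rw [CFL.flatten_map_singleton] at h1
  refine ⟨ls, ⟨h1, fun l hl => (h2 l hl).isLyndon, h3⟩, ?_⟩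
  rintro ls' ⟨g1, g2, g3⟩
  exact CFL.uniq w.length w le_rfl ls' ls g1 g2 g3 h1
    (fun l hl => (h2 l hl).isLyndon) h3
end
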